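/- arXiv:2508.05749 — 3 statements merged into one kernel-verified Lean document; each statement's English description precedes it below -/
import Mathlib

section
/- Let H_C = diag(x_1 I_{n_1}, …, x_m I_{n_m}) be a diagonal matrix with m distinct eigenvalues x_1,…,x_m, and let H_M = J be the all-ones n×n matrix. Then the Lie algebra generated by iH_C and iH_M (under repeated commutators and real linear combinations) has dimension at most m² + 1. -/
attribute [local instance] LieRing.ofAssociativeRing

open Matrix

namespace QwoaDLA

variable {n m : ℕ} (c : Fin n → Fin m) (x : Fin m → ℝ)

noncomputable def Dn : Matrix (Fin n) (Fin n) ℂ := Matrix.diagonal (fun i => (x (c i) : ℂ))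
noncomputable def Dm : Matrix (Fin m) (Fin m) ℂ := Matrix.diagonal (fun b => (x b : ℂ))
noncomputable def Nm : Matrix (Fin m) (Fin m) ℂ :=
  Matrix.diagonal (fun b => ((Finset.univ.filter (fun k => c k = b)).card : ℂ))

def blk (f : Matrix (Fin m) (Fin m) ℂ) : Matrix (Fin n) (Fin n) ℂ := f.submatrix c c

lemma blk_add (f g : Matrix (Fin m) (Fin m) ℂ) : blk c (f + g) = blk c f + blk c g := rfl
lemma blk_sub (f g : Matrix (Fin m) (Fin m) ℂ) : blk c (f - g) = blk c f - blk c g := rfl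
lemma blk_smul {R : Type*} [SMul R ℂ] (r : R) (f : Matrix (Fin m) (Fin m) ℂ) :
    blk c (r • f) = r • blk c f := rfl
lemma blk_zero : blk c (0 : Matrix (Fin m) (Fin m) ℂ) = 0 := rfl

lemma sum_fiber (F : Fin m → ℂ) :
    ∑ k : Fin n, F (c k) = ∑ b : Fin m, ((Finset.univ.filter (fun k => c k = b)).card : ℂ) * F b := by
  rw [← Fintype.sum_fiberwise c (fun k => F (c k))]
  refine Finset.sum_congr rfl (fun b _ => ?_)
  calc ∑ i : { i // c i = b }, F (c ↑i)
      = ∑ _i : { i // c i = b }, F b := Finset.sum_congr rfl (fun i _ => by rw [i.2])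
    _ = (Fintype.card { i // c i = b }) • F b := by rw [Finset.sum_const, Finset.card_univ]
    _ = ((Finset.univ.filter (fun k => c k = b)).card : ℂ) * F b := by
        rw [Fintype.card_subtype, nsmul_eq_mul]

lemma blk_mul (f g : Matrix (Fin m) (Fin m) ℂ) :
    blk c f * blk c g = blk c (f * Nm c * g) := by
  ext i j
  have h1 : (f * Nm c * g) (c i) (c j)
      = ∑ b, f (c i) b * ((Finset.univ.filter (fun k => c k = b)).card : ℂ) * g b (c j) := by
    rw [Matrix.mul_apply]
    simp only [Nm, Matrix.mul_diagonal]
  calc (blk c f * blk c g) i j = ∑ k, f (c i) (c k) * g (c k) (c j) := by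
        simp [blk, Matrix.mul_apply]
    _ = ∑ b, ((Finset.univ.filter (fun k => c k = b)).card : ℂ) * (f (c i) b * g b (c j)) :=
        sum_fiber c (fun b => f (c i) b * g b (c j))
    _ = blk c (f * Nm c * g) i j := by
        show _ = (f * Nm c * g) (c i) (c j)
        rw [h1]; exact Finset.sum_congr rfl fun b _ => by ring

lemma diag_comm (f : Matrix (Fin m) (Fin m) ℂ) :
    Dn c x * blk c f - blk c f * Dn c x = blk c (Dm x * f - f * Dm x) := by
  ext i j
  simp [Dn, Dm, blk, Matrix.sub_apply, Matrix.diagonal_mul, Matrix.mul_diagonal]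

lemma Dm_herm : (Dm x)ᴴ = Dm x := by
  simp [Dm, Matrix.diagonal_conjTranspose, funext_iff, Complex.star_def, Complex.conj_ofReal]

lemma Nm_herm : (Nm c)ᴴ = Nm c := by
  simp [Nm, Matrix.diagonal_conjTranspose, funext_iff, Complex.star_def]


lemma comm_herm {f : Matrix (Fin m) (Fin m) ℂ} (hf : fᴴ = -f) :
    (Dm x * f - f * Dm x)ᴴ = Dm x * f - f * Dm x := by
  rw [Matrix.conjTranspose_sub, Matrix.conjTranspose_mul, Matrix.conjTranspose_mul, Dm_herm, hf]
  simp only [Matrix.neg_mul, Matrix.mul_neg]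
  abel

lemma skew_prod {f g : Matrix (Fin m) (Fin m) ℂ} (hf : fᴴ = -f) (hg : gᴴ = -g) :
    (f * Nm c * g - g * Nm c * f)ᴴ = -(f * Nm c * g - g * Nm c * f) := by
  rw [Matrix.conjTranspose_sub, Matrix.conjTranspose_mul, Matrix.conjTranspose_mul,
    Matrix.conjTranspose_mul, Matrix.conjTranspose_mul, Nm_herm, hf, hg]
  simp only [Matrix.neg_mul, Matrix.mul_neg, neg_neg, Matrix.mul_assoc]
  abel

noncomputable def A : Matrix (Fin n) (Fin n) ℂ := Complex.I • Dn c x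

lemma lie_A_blk (h : Matrix (Fin m) (Fin m) ℂ) :
    ⁅A c x, blk c h⁆ = blk c (Complex.I • (Dm x * h - h * Dm x)) := by
  rw [Ring.lie_def, A, smul_mul_assoc, mul_smul_comm, ← smul_sub, diag_comm, blk_smul]

lemma lie_blk_blk (f g : Matrix (Fin m) (Fin m) ℂ) :
    ⁅blk c f, blk c g⁆ = blk c (f * Nm c * g - g * Nm c * f) := by
  rw [Ring.lie_def, blk_mul, blk_mul, blk_sub]

noncomputable def L : LieSubalgebra ℝ (Matrix (Fin n) (Fin n) ℂ) where
  carrier := {M | ∃ t : ℝ, ∃ f : Matrix (Fin m) (Fin m) ℂ, fᴴ = -f ∧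
    M = t • A c x + blk c f}
  add_mem' := by
    rintro _ _ ⟨t, f, hf, rfl⟩ ⟨s, g, hg, rfl⟩
    refine ⟨t + s, f + g, by rw [Matrix.conjTranspose_add, hf, hg]; abel, ?_⟩
    rw [blk_add, add_smul]
    abel
  smul_mem' := by
    rintro r _ ⟨t, f, hf, rfl⟩
    refine ⟨r * t, r • f, ?_, ?_⟩
    · rw [Matrix.conjTranspose_smul, hf, star_trivial, smul_neg]
    · rw [blk_smul, smul_add, smul_smul]
  zero_mem' := ⟨0, 0, by simp, by simp [blk_zero]⟩
  lie_mem' := by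
    rintro _ _ ⟨t, f, hf, rfl⟩ ⟨s, g, hg, rfl⟩
    refine ⟨0, t • (Complex.I • (Dm x * g - g * Dm x))
      - s • (Complex.I • (Dm x * f - f * Dm x)) + (f * Nm c * g - g * Nm c * f), ?_, ?_⟩
    · simp only [Matrix.conjTranspose_add, Matrix.conjTranspose_sub, Matrix.conjTranspose_smul,
        comm_herm x hf, comm_herm x hg, skew_prod c hf hg, star_trivial, Complex.star_def,
        Complex.conj_I, neg_smul, smul_neg]
      abel
    · simp only [add_lie, lie_add, smul_lie, lie_smul, lie_self, smul_zero, zero_add, smul_neg]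
      rw [lie_A_blk, lie_blk_blk, ← lie_skew (blk c f) (A c x), lie_A_blk]
      simp only [blk_add, blk_sub, blk_smul, smul_neg, zero_smul, zero_add]
      abel

noncomputable def tau : Matrix (Fin m) (Fin m) ℝ →ₗ[ℝ] Matrix (Fin m) (Fin m) ℂ where
  toFun a := Matrix.of fun b b' =>
    ((a b b' - a b' b : ℝ) : ℂ) + Complex.I * ((a b b' + a b' b : ℝ) : ℂ)
  map_add' a b := by
    ext i j
    simp only [Matrix.of_apply, Matrix.add_apply]
    push_cast
    ring
  map_smul' r a := by
    ext i j
    simp only [Matrix.of_apply, Matrix.smul_apply, RingHom.id_apply, smul_eq_mul,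
      Complex.real_smul]
    push_cast
    ring

def blkL : Matrix (Fin m) (Fin m) ℂ →ₗ[ℝ] Matrix (Fin n) (Fin n) ℂ where
  toFun := blk c
  map_add' := blk_add c
  map_smul' r f := blk_smul c r f

noncomputable def Phi : (ℝ × Matrix (Fin m) (Fin m) ℝ) →ₗ[ℝ] Matrix (Fin n) (Fin n) ℂ :=
  (LinearMap.fst ℝ ℝ (Matrix (Fin m) (Fin m) ℝ)).smulRight (A c x)
    + (blkL c).comp (tau.comp (LinearMap.snd ℝ ℝ (Matrix (Fin m) (Fin m) ℝ)))

lemma L_le_range : (L c x).toSubmodule ≤ LinearMap.range (Phi c x) := by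
  rintro M ⟨t, f, hf, rfl⟩
  refine ⟨(t, Matrix.of fun b b' => ((f b b').re + (f b b').im) / 2), ?_⟩
  have key : tau (Matrix.of fun b b' => ((f b b').re + (f b b').im) / 2) = f := by
    ext b b'
    have h1 : (starRingEnd ℂ) (f b' b) = -(f b b') := by
      have := congrFun (congrFun hf b) b'
      simpa [Matrix.conjTranspose_apply, Matrix.neg_apply] using this
    have hre : (f b' b).re = -(f b b').re := by
      have := congrArg Complex.re h1
      simpa using this
    have him : (f b' b).im = (f b b').im := by
      have := congrArg Complex.im h1
      simpa using this
    simp only [tau, LinearMap.coe_mk, AddHom.coe_mk, Matrix.of_apply]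
    apply Complex.ext <;>
      simp [hre, him] <;> ring
  simp only [Phi, LinearMap.add_apply, LinearMap.smulRight_apply, LinearMap.fst_apply,
    LinearMap.comp_apply, LinearMap.snd_apply, blkL, LinearMap.coe_mk, AddHom.coe_mk, key]

end QwoaDLA

/-- The Lie algebra (over ℝ, inside the `n × n` complex matrices) generated by
`i·H_C` and `i·H_M`, where `H_C = diag(x₁ I_{n₁}, …, x_m I_{n_m})` has `m` pairwise
distinct eigenvalues and `H_M = J` is the all-ones matrix, has dimension at most `m² + 1`. -/
theorem qwoa_dla_dim_le {n m : ℕ} (c : Fin n → Fin m) (hc : Function.Surjective c)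
    (x : Fin m → ℝ) (hx : Function.Injective x) :
    Module.finrank ℝ
      (LieSubalgebra.lieSpan ℝ (Matrix (Fin n) (Fin n) ℂ)
        {Complex.I • Matrix.diagonal (fun i => (x (c i) : ℂ)),
         Complex.I • Matrix.of (fun _ _ => (1 : ℂ))}) ≤ m ^ 2 + 1 := by
  classical
  have hle : LieSubalgebra.lieSpan ℝ (Matrix (Fin n) (Fin n) ℂ)
      {Complex.I • Matrix.diagonal (fun i => (x (c i) : ℂ)),
       Complex.I • Matrix.of (fun _ _ => (1 : ℂ))} ≤ QwoaDLA.L c x := by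
    rw [LieSubalgebra.lieSpan_le]
    intro M hM
    simp only [Set.mem_insert_iff, Set.mem_singleton_iff] at hM
    rcases hM with rfl | rfl
    · exact ⟨1, 0, by simp, by simp [QwoaDLA.blk_zero, QwoaDLA.A, QwoaDLA.Dn]⟩
    · refine ⟨0, Matrix.of fun _ _ => Complex.I, ?_, ?_⟩
      · ext b b'
        simp [Matrix.conjTranspose_apply, Complex.conj_I]
      · ext i j
        simp [QwoaDLA.blk, QwoaDLA.A]
  have h2 : (LieSubalgebra.lieSpan ℝ (Matrix (Fin n) (Fin n) ℂ)
      {Complex.I • Matrix.diagonal (fun i => (x (c i) : ℂ)),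
       Complex.I • Matrix.of (fun _ _ => (1 : ℂ))}).toSubmodule ≤ (QwoaDLA.L c x).toSubmodule := hle
  have h3 := Submodule.finrank_mono h2
  have h4 := Submodule.finrank_mono (QwoaDLA.L_le_range c x)
  have h5 := LinearMap.finrank_range_le (QwoaDLA.Phi c x)
  have h6 : Module.finrank ℝ (ℝ × Matrix (Fin m) (Fin m) ℝ) = m ^ 2 + 1 := by
    simp [Module.finrank_prod, Module.finrank_matrix, pow_two]
    ring
  calc Module.finrank ℝ _ ≤ _ := h3
    _ ≤ _ := h4
    _ ≤ _ := h5
    _ = m ^ 2 + 1 := h6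
end

section
/- For the unstructured search problem with exactly one marked element out of N ≥ 2 elements, the Lie algebra generated by iH_C and iH_M has dimension exactly 4, where H_C is the diagonal projector onto the marked element and H_M is the N×N all-ones matrix. -/
open Matrix

attribute [local instance 100] LieRing.ofAssociativeRing

variable {N : ℕ} (m₀ : Fin N)

lemma vmv_mul {N : ℕ} (a b c d : Fin N → ℂ) :
    vecMulVec a b * vecMulVec c d = (b ⬝ᵥ c) • vecMulVec a d := by
  ext i j
  simp only [Matrix.mul_apply, vecMulVec_apply, Matrix.smul_apply, dotProduct, smul_eq_mul,
    Finset.sum_mul]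
  exact Finset.sum_congr rfl fun k _ => by ring

noncomputable def vv : Fin N → ℂ := fun i => if i = m₀ then 1 else 0
noncomputable def uu : Fin N → ℂ := fun _ => 1

lemma dvv : vv m₀ ⬝ᵥ vv m₀ = 1 := by simp [vv, dotProduct]
lemma dvu : vv m₀ ⬝ᵥ uu = 1 := by simp [vv, uu, dotProduct]
lemma duv : uu ⬝ᵥ vv m₀ = 1 := by simp [vv, uu, dotProduct]
lemma duu : (uu : Fin N → ℂ) ⬝ᵥ uu = (N : ℂ) := by simp [uu, dotProduct]

noncomputable def Am : Matrix (Fin N) (Fin N) ℂ := vecMulVec (vv m₀) (vv m₀)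
noncomputable def Bm : Matrix (Fin N) (Fin N) ℂ := vecMulVec uu uu
noncomputable def Cm : Matrix (Fin N) (Fin N) ℂ := vecMulVec (vv m₀) uu
noncomputable def Dm : Matrix (Fin N) (Fin N) ℂ := vecMulVec uu (vv m₀)

lemma mAA : Am m₀ * Am m₀ = Am m₀ := by rw [Am, vmv_mul, dvv, one_smul]
lemma mAB : Am m₀ * Bm = Cm m₀ := by rw [Am, Bm, Cm, vmv_mul, dvu, one_smul]
lemma mAC : Am m₀ * Cm m₀ = Cm m₀ := by rw [Am, Cm, vmv_mul, dvv, one_smul]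
lemma mAD : Am m₀ * Dm m₀ = Am m₀ := by rw [Am, Dm, vmv_mul, dvu, one_smul]
lemma mBA : Bm * Am m₀ = Dm m₀ := by rw [Am, Bm, Dm, vmv_mul, duv, one_smul]
lemma mBB : (Bm : Matrix (Fin N) (Fin N) ℂ) * Bm = (N : ℂ) • Bm := by rw [Bm, vmv_mul, duu]
lemma mBC : Bm * Cm m₀ = Bm := by rw [Bm, Cm, vmv_mul, duv, one_smul]
lemma mBD : Bm * Dm m₀ = (N : ℂ) • Dm m₀ := by rw [Bm, Dm, vmv_mul, duu]
lemma mCA : Cm m₀ * Am m₀ = Am m₀ := by rw [Am, Cm, vmv_mul, duv, one_smul]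
lemma mCB : Cm m₀ * Bm = (N : ℂ) • Cm m₀ := by rw [Bm, Cm, vmv_mul, duu]
lemma mCC : Cm m₀ * Cm m₀ = Cm m₀ := by rw [Cm, vmv_mul, duv, one_smul]
lemma mCD : Cm m₀ * Dm m₀ = (N : ℂ) • Am m₀ := by rw [Am, Cm, Dm, vmv_mul, duu]
lemma mDA : Dm m₀ * Am m₀ = Dm m₀ := by rw [Am, Dm, vmv_mul, dvv, one_smul]
lemma mDB : Dm m₀ * Bm = Bm := by rw [Bm, Dm, vmv_mul, dvu, one_smul]
lemma mDC : Dm m₀ * Cm m₀ = Bm := by rw [Bm, Cm, Dm, vmv_mul, dvv, one_smul]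
lemma mDD : Dm m₀ * Dm m₀ = Dm m₀ := by rw [Dm, vmv_mul, dvu, one_smul]

noncomputable def X1 : Matrix (Fin N) (Fin N) ℂ := Complex.I • Am m₀
noncomputable def X2 : Matrix (Fin N) (Fin N) ℂ := Complex.I • Bm
noncomputable def X3 : Matrix (Fin N) (Fin N) ℂ := Dm m₀ - Cm m₀
noncomputable def X4 : Matrix (Fin N) (Fin N) ℂ := Complex.I • (Cm m₀ + Dm m₀)

lemma rsmul (r : ℝ) (M : Matrix (Fin N) (Fin N) ℂ) : (r : ℂ) • M = r • M := by
  rw [← algebraMap_smul ℂ r M]; rfl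

lemma hb12 : ⁅X1 m₀, (X2 : Matrix (Fin N) (Fin N) ℂ)⁆ = X3 m₀ := by
  simp only [Ring.lie_def, X1, X2, X3, smul_mul_assoc, mul_smul_comm, mAB, mBA, smul_smul,
    Complex.I_mul_I, neg_one_smul, neg_sub]
  match_scalars <;> (ring_nf; try simp [Complex.I_sq]; try ring_nf)
lemma hb13 : ⁅X1 m₀, X3 m₀⁆ = (2 : ℝ) • X1 m₀ - X4 m₀ := by
  rw [← rsmul]
  simp only [Ring.lie_def, X1, X3, X4, smul_mul_assoc, mul_smul_comm, mul_sub, sub_mul,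
    mAD, mAC, mDA, mCA, smul_smul, smul_sub, smul_add, Complex.ofReal_ofNat]
  match_scalars <;> (ring_nf; try simp [Complex.I_sq]; try ring_nf)
lemma hb14 : ⁅X1 m₀, X4 m₀⁆ = X3 m₀ := by
  simp only [Ring.lie_def, X1, X3, X4, smul_mul_assoc, mul_smul_comm, mul_add, add_mul,
    mAC, mAD, mCA, mDA, smul_smul, Complex.I_mul_I, smul_add, neg_one_smul]
  match_scalars <;> (ring_nf; try simp [Complex.I_sq]; try ring_nf)
lemma hb23 : ⁅(X2 : Matrix (Fin N) (Fin N) ℂ), X3 m₀⁆ = (N : ℝ) • X4 m₀ - (2 : ℝ) • X2 := by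
  rw [← rsmul, ← rsmul]
  simp only [Ring.lie_def, X2, X3, X4, smul_mul_assoc, mul_smul_comm, mul_sub, sub_mul,
    mBD, mBC, mDB, mCB, smul_smul, smul_sub, smul_add, Complex.ofReal_ofNat,
    Complex.ofReal_natCast]
  match_scalars <;> (ring_nf; try simp [Complex.I_sq]; try ring_nf)
lemma hb24 : ⁅(X2 : Matrix (Fin N) (Fin N) ℂ), X4 m₀⁆ = -((N : ℝ) • X3 m₀) := by
  rw [← rsmul]
  simp only [Ring.lie_def, X2, X3, X4, smul_mul_assoc, mul_smul_comm, mul_add, add_mul,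
    mBC, mBD, mCB, mDB, smul_smul, Complex.I_mul_I, smul_add, smul_sub, neg_one_smul,
    Complex.ofReal_natCast]
  match_scalars <;> (ring_nf; try simp [Complex.I_sq]; try ring_nf)
lemma hb34 : ⁅X3 m₀, X4 m₀⁆ = (2 : ℝ) • X2 - ((2 * N : ℝ)) • X1 m₀ := by
  rw [← rsmul, ← rsmul]
  simp only [Ring.lie_def, X1, X2, X3, X4, smul_mul_assoc, mul_smul_comm, mul_add, add_mul,
    mul_sub, sub_mul, mDC, mDD, mCC, mCD, smul_smul, smul_add, smul_sub,
    Complex.ofReal_ofNat, Complex.ofReal_mul, Complex.ofReal_natCast]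
  match_scalars <;> (ring_nf; try simp [Complex.I_sq]; try ring_nf)

/-- For unstructured search with exactly one marked element out of `N ≥ 2`,
the Lie algebra generated by `i·H_C` (diagonal projector onto the marked element)
and `i·H_M` (all-ones matrix) has dimension exactly 4. -/
theorem qwoa_search_dla_one_marked {N : ℕ} (hN : 2 ≤ N) (m₀ : Fin N) :
    Module.finrank ℝ
      (LieSubalgebra.lieSpan ℝ (Matrix (Fin N) (Fin N) ℂ)
        {Complex.I • Matrix.diagonal (fun i => if i = m₀ then (1 : ℂ) else 0),
         Complex.I • Matrix.of (fun _ _ => (1 : ℂ))}) = 4 := by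
  classical
  set f : Fin 4 → Matrix (Fin N) (Fin N) ℂ := ![X1 m₀, X2, X3 m₀, X4 m₀] with hf
  set W : Submodule ℝ (Matrix (Fin N) (Fin N) ℂ) := Submodule.span ℝ (Set.range f) with hW
  have hX1 : X1 m₀ ∈ W := Submodule.subset_span ⟨0, rfl⟩
  have hX2 : (X2 : Matrix (Fin N) (Fin N) ℂ) ∈ W := Submodule.subset_span ⟨1, rfl⟩
  have hX3 : X3 m₀ ∈ W := Submodule.subset_span ⟨2, rfl⟩
  have hX4 : X4 m₀ ∈ W := Submodule.subset_span ⟨3, rfl⟩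
  have key : ∀ i j : Fin 4, ⁅f i, f j⁆ ∈ W := by
    intro i j
    fin_cases i <;> fin_cases j
    · show ⁅X1 m₀, X1 m₀⁆ ∈ W
      rw [lie_self]; exact W.zero_mem
    · show ⁅X1 m₀, (X2 : Matrix (Fin N) (Fin N) ℂ)⁆ ∈ W
      rw [hb12]; exact hX3
    · show ⁅X1 m₀, X3 m₀⁆ ∈ W
      rw [hb13]; exact W.sub_mem (W.smul_mem _ hX1) hX4
    · show ⁅X1 m₀, X4 m₀⁆ ∈ W
      rw [hb14]; exact hX3
    · show ⁅(X2 : Matrix (Fin N) (Fin N) ℂ), X1 m₀⁆ ∈ W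
      rw [← lie_skew, hb12]; exact W.neg_mem (hX3)
    · show ⁅(X2 : Matrix (Fin N) (Fin N) ℂ), (X2 : Matrix (Fin N) (Fin N) ℂ)⁆ ∈ W
      rw [lie_self]; exact W.zero_mem
    · show ⁅(X2 : Matrix (Fin N) (Fin N) ℂ), X3 m₀⁆ ∈ W
      rw [hb23]; exact W.sub_mem (W.smul_mem _ hX4) (W.smul_mem _ hX2)
    · show ⁅(X2 : Matrix (Fin N) (Fin N) ℂ), X4 m₀⁆ ∈ W
      rw [hb24]; exact W.neg_mem (W.smul_mem _ hX3)
    · show ⁅X3 m₀, X1 m₀⁆ ∈ W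
      rw [← lie_skew, hb13]; exact W.neg_mem (W.sub_mem (W.smul_mem _ hX1) hX4)
    · show ⁅X3 m₀, (X2 : Matrix (Fin N) (Fin N) ℂ)⁆ ∈ W
      rw [← lie_skew, hb23]; exact W.neg_mem (W.sub_mem (W.smul_mem _ hX4) (W.smul_mem _ hX2))
    · show ⁅X3 m₀, X3 m₀⁆ ∈ W
      rw [lie_self]; exact W.zero_mem
    · show ⁅X3 m₀, X4 m₀⁆ ∈ W
      rw [hb34]; exact W.sub_mem (W.smul_mem _ hX2) (W.smul_mem _ hX1)
    · show ⁅X4 m₀, X1 m₀⁆ ∈ W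
      rw [← lie_skew, hb14]; exact W.neg_mem (hX3)
    · show ⁅X4 m₀, (X2 : Matrix (Fin N) (Fin N) ℂ)⁆ ∈ W
      rw [← lie_skew, hb24]; exact W.neg_mem (W.neg_mem (W.smul_mem _ hX3))
    · show ⁅X4 m₀, X3 m₀⁆ ∈ W
      rw [← lie_skew, hb34]; exact W.neg_mem (W.sub_mem (W.smul_mem _ hX2) (W.smul_mem _ hX1))
    · show ⁅X4 m₀, X4 m₀⁆ ∈ W
      rw [lie_self]; exact W.zero_mem
  have hclosed : ∀ {x y : Matrix (Fin N) (Fin N) ℂ}, x ∈ W → y ∈ W → ⁅x, y⁆ ∈ W := by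
    intro x y hx hy
    induction hx, hy using Submodule.span_induction₂ with
    | mem_mem a b ha hb =>
      obtain ⟨i, rfl⟩ := ha; obtain ⟨j, rfl⟩ := hb; exact key i j
    | zero_left b hb => rw [zero_lie]; exact W.zero_mem
    | zero_right a ha => rw [lie_zero]; exact W.zero_mem
    | add_left a b c _ _ _ h1 h2 => rw [add_lie]; exact W.add_mem h1 h2
    | add_right a b c _ _ _ h1 h2 => rw [lie_add]; exact W.add_mem h1 h2
    | smul_left r a b _ _ h => rw [smul_lie]; exact W.smul_mem r h
    | smul_right r a b _ _ h => rw [lie_smul]; exact W.smul_mem r h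
  set L : LieSubalgebra ℝ (Matrix (Fin N) (Fin N) ℂ) :=
    { toSubmodule := W, lie_mem' := fun hx hy => hclosed hx hy } with hL
  have h1 : Complex.I • Matrix.diagonal (fun i => if i = m₀ then (1 : ℂ) else 0) = X1 m₀ := by
    rw [X1, Am]
    congr 1
    ext i j
    simp only [Matrix.diagonal, vecMulVec_apply, vv, Matrix.of_apply]
    split_ifs <;> simp_all
  have h2 : Complex.I • Matrix.of (fun _ _ => (1 : ℂ)) = (X2 : Matrix (Fin N) (Fin N) ℂ) := by
    rw [X2, Bm]
    congr 1
    ext i j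
    simp [vecMulVec_apply, uu]
  have hset :
      ({Complex.I • Matrix.diagonal (fun i => if i = m₀ then (1 : ℂ) else 0),
        Complex.I • Matrix.of (fun _ _ => (1 : ℂ))} :
        Set (Matrix (Fin N) (Fin N) ℂ)) = {X1 m₀, X2} := by rw [h1, h2]
  have hspan : LieSubalgebra.lieSpan ℝ (Matrix (Fin N) (Fin N) ℂ)
      {Complex.I • Matrix.diagonal (fun i => if i = m₀ then (1 : ℂ) else 0),
       Complex.I • Matrix.of (fun _ _ => (1 : ℂ))} = L := by
    rw [hset]
    apply le_antisymm
    · rw [LieSubalgebra.lieSpan_le]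
      rintro x (rfl | rfl)
      · exact hX1
      · exact hX2
    · intro x hx
      have hx' : x ∈ W := hx
      have hgen : ∀ i : Fin 4, f i ∈ LieSubalgebra.lieSpan ℝ (Matrix (Fin N) (Fin N) ℂ)
          ({X1 m₀, X2} : Set (Matrix (Fin N) (Fin N) ℂ)) := by
        intro i
        have g1 : X1 m₀ ∈ LieSubalgebra.lieSpan ℝ (Matrix (Fin N) (Fin N) ℂ)
            ({X1 m₀, X2} : Set _) := LieSubalgebra.subset_lieSpan (by left; rfl)
        have g2 : (X2 : Matrix (Fin N) (Fin N) ℂ) ∈ LieSubalgebra.lieSpan ℝ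
            (Matrix (Fin N) (Fin N) ℂ) ({X1 m₀, X2} : Set _) :=
          LieSubalgebra.subset_lieSpan (by right; rfl)
        have g3 : X3 m₀ ∈ LieSubalgebra.lieSpan ℝ (Matrix (Fin N) (Fin N) ℂ)
            ({X1 m₀, X2} : Set _) := by rw [← hb12]; exact LieSubalgebra.lie_mem _ g1 g2
        have g4 : X4 m₀ ∈ LieSubalgebra.lieSpan ℝ (Matrix (Fin N) (Fin N) ℂ)
            ({X1 m₀, X2} : Set _) := by
          have : X4 m₀ = (2 : ℝ) • X1 m₀ - ⁅X1 m₀, X3 m₀⁆ := by rw [hb13]; abel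
          rw [this]
          exact sub_mem ((LieSubalgebra.lieSpan ℝ _ _).smul_mem _ g1) (LieSubalgebra.lie_mem _ g1 g3)
        fin_cases i <;> simpa [hf] using (by assumption : _)
      refine Submodule.span_induction ?_ ?_ ?_ ?_ hx'
      · rintro a ⟨i, rfl⟩; exact hgen i
      · exact zero_mem _
      · intro a b _ _ ha hb; exact add_mem ha hb
      · intro r a _ ha; exact (LieSubalgebra.lieSpan ℝ _ _).smul_mem r ha
  rw [hspan]
  have hfr : Module.finrank ℝ L = Module.finrank ℝ W := rfl
  rw [hfr, hW]
  have li : LinearIndependent ℝ f := by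
    obtain ⟨m1, hm1⟩ : ∃ m1 : Fin N, m1 ≠ m₀ :=
      Fintype.exists_ne_of_one_lt_card (by rw [Fintype.card_fin]; omega) m₀
    rw [Fintype.linearIndependent_iff]
    intro g hg
    rw [Fin.sum_univ_four] at hg
    simp only [hf, Matrix.cons_val_zero, Matrix.cons_val_one, Matrix.head_cons,
      Matrix.cons_val_two, Matrix.tail_cons, Matrix.cons_val_three] at hg
    have e1 := congrFun (congrFun hg m1) m1
    have e2 := congrFun (congrFun hg m₀) m1
    have e3 := congrFun (congrFun hg m1) m₀
    have e4 := congrFun (congrFun hg m₀) m₀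
    simp only [Matrix.add_apply, Matrix.smul_apply, Matrix.sub_apply, Matrix.zero_apply,
      X1, X2, X3, X4, Am, Bm, Cm, Dm, vecMulVec_apply, vv, uu, smul_eq_mul,
      if_neg hm1, if_pos rfl, Complex.real_smul, mul_zero, zero_mul, mul_one, one_mul,
      add_zero, zero_add, sub_zero, zero_sub, smul_zero, if_true] at e1 e2 e3 e4
    have h1 : g 1 = 0 := by simpa [Complex.ext_iff] using e1
    rw [Complex.ext_iff] at e2 e3 e4
    simp [h1, Complex.add_re, Complex.add_im] at e2 e3 e4
    intro i
    fin_cases i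
    · show g 0 = 0; nlinarith [e2.1, e2.2, e3.1, e3.2]
    · exact h1
    · exact e2.1
    · exact e2.2
  rw [finrank_span_eq_card li]
  simp
end

section
/- Let H_1 be the 2×2-block matrix (in block form with respect to a partition into a marked block of size a ≥ 2 and unmarked block of size b ≥ 1) given by H_1 = diag(I_a, 0_b), and H_2 the all-ones matrix. Define H_3 = [H_1,H_2], H_4 = [H_1,H_3], H_5 = [H_2,H_3]. Then {H_1, H_2, H_3, H_4, H_5} is a linearly independent set of matrices. -/
lemma aux_sum_lt (a b : ℕ) :
    (∑ k : Fin (a+b), (if (k:ℕ) < a then (1:ℝ) else 0)) = ↑a := by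
  rw [Fin.sum_univ_eq_sum_range (fun m => if m < a then (1:ℝ) else 0)]
  induction b with
  | zero =>
      rw [Nat.add_zero, Finset.sum_congr rfl (fun k hk => if_pos (Finset.mem_range.mp hk))]
      simp
  | succ n ih =>
      rw [Nat.add_succ, Finset.sum_range_succ, if_neg (by omega), add_zero, ih]


/-- With `H₁ = diag(I_a, 0_b)` (`a ≥ 2`, `b ≥ 1`), `H₂` the all-ones matrix,
`H₃ = [H₁,H₂]`, `H₄ = [H₁,H₃]`, `H₅ = [H₂,H₃]`, the set
`{H₁, H₂, H₃, H₄, H₅}` is linearly independent. -/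
theorem search_generators_linearIndependent {a b : ℕ} (ha : 2 ≤ a) (hb : 1 ≤ b) :
    let H1 : Matrix (Fin (a + b)) (Fin (a + b)) ℝ :=
      Matrix.of fun i j => if i = j ∧ (i : ℕ) < a then 1 else 0
    let H2 : Matrix (Fin (a + b)) (Fin (a + b)) ℝ := Matrix.of fun _ _ => 1
    let H3 := H1 * H2 - H2 * H1
    let H4 := H1 * H3 - H3 * H1
    let H5 := H2 * H3 - H3 * H2
    LinearIndependent ℝ ![H1, H2, H3, H4, H5] := by
  intro H1 H2 H3 H4 H5
  have hH3 : ∀ x y : Fin (a+b), H3 x y =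
      (if (x:ℕ) < a then (1:ℝ) else 0) - (if (y:ℕ) < a then 1 else 0) := by
    intro x y
    simp [H3, H1, H2, Matrix.sub_apply, Matrix.mul_apply, ite_and]
  have hM3 : H3 = Matrix.of (fun x y : Fin (a+b) =>
      (if (x:ℕ) < a then (1:ℝ) else 0) - (if (y:ℕ) < a then 1 else 0)) := by
    ext x y; exact hH3 x y
  have hH4 : ∀ x y : Fin (a+b), H4 x y =
      ((if (x:ℕ) < a then (1:ℝ) else 0) - (if (y:ℕ) < a then 1 else 0)) *
      ((if (x:ℕ) < a then (1:ℝ) else 0) - (if (y:ℕ) < a then 1 else 0)) := by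
    intro x y
    simp only [H4, hM3, Matrix.sub_apply, Matrix.mul_apply, H1, Matrix.of_apply, ite_and]
    simp [ite_mul, mul_ite, Finset.sum_ite_eq, Finset.sum_ite_eq']
    by_cases hx : (x:ℕ) < a <;> by_cases hy : (y:ℕ) < a <;> simp [hx, hy]
  have hH5 : ∀ x y : Fin (a+b), H5 x y =
      ((a:ℝ) - ((a:ℝ)+(b:ℝ)) * (if (y:ℕ) < a then 1 else 0)) -
      (((a:ℝ)+(b:ℝ)) * (if (x:ℕ) < a then 1 else 0) - (a:ℝ)) := by
    intro x y
    simp only [H5, hM3, Matrix.sub_apply, Matrix.mul_apply, H2, Matrix.of_apply]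
    simp only [one_mul, mul_one]
    rw [Finset.sum_sub_distrib, Finset.sum_sub_distrib]
    simp [aux_sum_lt a b, Finset.sum_const, Finset.card_univ, nsmul_eq_mul]
    try push_cast
    try ring
  rw [Fintype.linearIndependent_iff]
  intro g hg
  have key : ∀ x y : Fin (a+b),
      g 0 * H1 x y + g 1 * H2 x y + g 2 * H3 x y + g 3 * H4 x y + g 4 * H5 x y = 0 := by
    intro x y
    have h := congrFun (congrFun hg x) y
    simpa [Fin.sum_univ_five, Matrix.sum_apply, Matrix.smul_apply, smul_eq_mul,
      mul_comm] using h
  have h0a : (0:ℕ) < a + b := by omega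
  have h1a : (1:ℕ) < a + b := by omega
  have haa : a < a + b := by omega
  have hz : (0:ℕ) < a := by omega
  have ho : (1:ℕ) < a := by omega
  have hne01 : (0:ℕ) ≠ 1 := by omega
  have hne0a : (0:ℕ) ≠ a := by omega
  have hnea0 : a ≠ (0:ℕ) := by omega
  have hnaa : ¬ (a < a) := lt_irrefl a
  have e1 := key ⟨0, h0a⟩ ⟨0, h0a⟩
  have e2 := key ⟨0, h0a⟩ ⟨1, h1a⟩
  have e3 := key ⟨0, h0a⟩ ⟨a, haa⟩
  have e4 := key ⟨a, haa⟩ ⟨0, h0a⟩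
  have e5 := key ⟨a, haa⟩ ⟨a, haa⟩
  simp only [H1, H2, hH3, hH4, hH5, Matrix.of_apply, Fin.mk.injEq, Fin.val_mk] at e1 e2 e3 e4 e5
  simp [hz, ho, hne0a, hnea0, hnaa, hne01] at e1 e2 e3 e4 e5
  ring_nf at e1 e2 e3 e4 e5
  have hA : (2:ℝ) ≤ (a:ℝ) := by exact_mod_cast ha
  have hB : (1:ℝ) ≤ (b:ℝ) := by exact_mod_cast hb
  have hg4 : g 4 = 0 := by
    have hsum : g 4 * ((a:ℝ) + (b:ℝ)) = 0 := by nlinarith [e2, e5]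
    rcases mul_eq_zero.mp hsum with h | h
    · exact h
    · exfalso; linarith
  rw [hg4] at e1 e2 e3 e4 e5
  intro i
  fin_cases i <;> simp <;> linarith
end
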